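/- Let u and v be nonempty words over an alphabet such that u and v are not both powers of a common word, and suppose the last letters of u and v are distinct. Then for every n ≥ 3, the word (uv)^n u is primitive, i.e. it is not of the form w^t for any word w and integer t ≥ 2. -/

import Mathlib

namespace PWP

variable {α : Type*}

/-- list power -/
def lpow (x : List α) : ℕ → List α
  | 0 => []
  | n+1 => x ++ lpow x n

@[simp] theorem lpow_zero (x : List α) : lpow x 0 = [] := rfl
theorem lpow_succ (x : List α) (n : ℕ) : lpow x (n+1) = x ++ lpow x n := rfl

theorem lpow_one (x : List α) : lpow x 1 = x := by
  rw [lpow_succ, lpow_zero, List.append_nil]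

theorem lpow_add (x : List α) (m n : ℕ) : lpow x (m+n) = lpow x m ++ lpow x n := by
  induction m with
  | zero => simp
  | succ m ih => rw [Nat.succ_add, lpow_succ, lpow_succ, ih, List.append_assoc]

@[simp] theorem lpow_length (x : List α) (n : ℕ) : (lpow x n).length = n * x.length := by
  induction n with
  | zero => simp
  | succ n ih => rw [lpow_succ, List.length_append, ih, Nat.succ_mul]; ring

theorem toList_pow (x : FreeMonoid α) (n : ℕ) :
    FreeMonoid.toList (x ^ n) = lpow (FreeMonoid.toList x) n := by
  induction n with
  | zero => rfl
  | succ n ih => rw [pow_succ', FreeMonoid.toList_mul, ih, lpow_succ]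

/-- index-based periodicity -/
def HasP (w : List α) (p : ℕ) : Prop := ∀ i, i + p < w.length → w[i+p]? = w[i]?

theorem hasP_of_drop {w : List α} {p : ℕ} (h : w.drop p <+: w) : HasP w p := by
  intro i hi
  obtain ⟨s, hs⟩ := h
  have h1 : (w.drop p)[i]? = w[p+i]? := List.getElem?_drop
  have h2 : (w.drop p ++ s)[i]? = (w.drop p)[i]? :=
    List.getElem?_append_left (by simp; omega)
  rw [hs] at h2
  rw [Nat.add_comm i p, ← h1, ← h2]

theorem HasP.sub {w : List α} {p q : ℕ} (hp : HasP w p) (hq : HasP w q)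
    (hpq : p ≤ q) (hlen : p + q ≤ w.length) : HasP w (q - p) := by
  intro i hi
  rcases Nat.lt_or_ge (i + q) w.length with h | h
  · have e1 : w[(i + (q-p)) + p]? = w[i + (q-p)]? := hp _ (by omega)
    have e2 : w[i + q]? = w[i]? := hq _ (by omega)
    have h3 : i + (q - p) + p = i + q := by omega
    rw [h3] at e1
    rw [← e1, e2]
  · have hip : p ≤ i := by omega
    have e1 : w[(i - p) + q]? = w[i - p]? := hq _ (by omega)
    have e2 : w[(i - p) + p]? = w[i - p]? := hp _ (by omega)
    have h3 : i - p + q = i + (q - p) := by omega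
    have h4 : i - p + p = i := by omega
    rw [h3] at e1
    rw [h4] at e2
    rw [e1, e2]

theorem HasP.gcd {w : List α} : ∀ p q : ℕ, HasP w p → HasP w q →
    p + q ≤ w.length → HasP w (Nat.gcd p q) := by
  have H : ∀ N p q : ℕ, p + q ≤ N → HasP w p → HasP w q →
      p + q ≤ w.length → HasP w (Nat.gcd p q) := by
    intro N
    induction N with
    | zero =>
      intro p q h hp hq _
      obtain ⟨rfl, rfl⟩ : p = 0 ∧ q = 0 := by omega
      simpa using hp
    | succ N ih =>
      intro p q h hp hq hlen
      rcases Nat.eq_zero_or_pos p with rfl | hp0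
      · simpa using hq
      rcases Nat.eq_zero_or_pos q with rfl | hq0
      · simpa using hp
      rcases le_or_gt p q with hle | hlt
      · rw [← Nat.gcd_sub_self_right hle]
        exact ih p (q - p) (by omega) hp (hp.sub hq hle hlen) (by omega)
      · rw [← Nat.gcd_sub_self_left hlt.le]
        exact ih (p - q) q (by omega) (hq.sub hp hlt.le (by omega)) hq (by omega)
  exact fun p q hp hq hlen => H (p + q) p q le_rfl hp hq hlen

theorem HasP.drop_self {w : List α} {g : ℕ} (h : HasP w g) : HasP (w.drop g) g := by
  intro i hi
  rw [List.length_drop] at hi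
  have e1 : (w.drop g)[i+g]? = w[g+(i+g)]? := List.getElem?_drop
  have e2 : (w.drop g)[i]? = w[g+i]? := List.getElem?_drop
  have e3 : w[(g+i)+g]? = w[g+i]? := h _ (by omega)
  have h4 : g + (i + g) = (g + i) + g := by omega
  rw [e1, h4, e3, e2]

theorem take_drop_eq_take {w : List α} {g : ℕ} (h : HasP w g) (hle : 2 * g ≤ w.length) :
    (w.drop g).take g = w.take g := by
  apply List.ext_getElem?
  intro i
  rcases Nat.lt_or_ge i g with hi | hi
  · rw [List.getElem?_take_of_lt hi, List.getElem?_take_of_lt hi, List.getElem?_drop]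
    have e := h i (by omega)
    rw [Nat.add_comm g i]
    rw [e]
  · rw [List.getElem?_eq_none, List.getElem?_eq_none] <;> simp <;> omega

theorem eq_lpow_of_hasP {g : ℕ} (hg : 0 < g) :
    ∀ (n : ℕ) (w : List α), w.length ≤ n → HasP w g → g ∣ w.length →
      w = lpow (w.take g) (w.length / g) := by
  intro n
  induction n with
  | zero =>
    intro w hlen _ _
    have hw : w = [] := List.length_eq_zero_iff.mp (by omega)
    subst hw; simp
  | succ n ih =>
    intro w hlen h hdvd
    rcases Nat.eq_zero_or_pos w.length with h0 | h0
    · have hw : w = [] := List.length_eq_zero_iff.mp h0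
      subst hw; simp
    have hgle : g ≤ w.length := Nat.le_of_dvd h0 hdvd
    obtain ⟨k, hk⟩ := hdvd
    have hk1 : 1 ≤ k := by
      rcases Nat.eq_zero_or_pos k with rfl | hk1
      · omega
      · exact hk1
    rcases Nat.lt_or_ge w.length (2*g) with hsmall | hbig
    · have hkeq : k = 1 := by
        rcases Nat.lt_or_ge k 2 with h2 | h2
        · omega
        · have : 2 * g ≤ g * k := by
            calc 2 * g = g * 2 := by ring
            _ ≤ g * k := Nat.mul_le_mul_left g h2
          omega
      subst hkeq
      have hwl : w.length = g := by omega
      rw [hwl, Nat.div_self hg, lpow_succ, lpow_zero, List.append_nil,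
        ← hwl, List.take_length]
    · obtain ⟨k'', rfl⟩ : ∃ k'', k = k'' + 1 := ⟨k - 1, by omega⟩
      rw [Nat.mul_succ] at hk
      have hdrop := h.drop_self
      have hld : (w.drop g).length = w.length - g := by simp
      have ihd := ih (w.drop g) (by omega) hdrop
        (by rw [hld]; exact ⟨k'', by omega⟩)
      rw [take_drop_eq_take h hbig, hld] at ihd
      have hsub : (w.length - g) / g = k'' := by
        have h5 : w.length - g = g * k'' := by omega
        rw [h5, Nat.mul_div_cancel_left _ hg]
      have hdiv : w.length / g = k'' + 1 := by
        have h5 : w.length = g * (k'' + 1) := by rw [Nat.mul_succ]; omega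
        rw [h5, Nat.mul_div_cancel_left _ hg]
      rw [hsub] at ihd
      conv_lhs => rw [← List.take_append_drop g w, ihd]
      rw [hdiv, lpow_succ]

theorem take_mul_lpow (r : List α) : ∀ (a k : ℕ), a ≤ k →
    (lpow r k).take (a * r.length) = lpow r a := by
  intro a
  induction a with
  | zero => intro k _; simp
  | succ a ih =>
    intro k hk
    obtain ⟨k', rfl⟩ : ∃ k', k = k' + 1 := ⟨k - 1, by omega⟩
    rw [lpow_succ, lpow_succ, Nat.succ_mul, Nat.add_comm (a * r.length) r.length,
      ← ih k' (by omega)]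
    rw [List.take_append, List.take_of_length_le (by omega),
      Nat.add_sub_cancel_left]

end PWP

open PWP

/-- An element of a free monoid is primitive if it is nonempty and not of the form `w ^ t`
with `t ≥ 2`. -/
def FreeMonoid.Primitive {α : Type*} (w : FreeMonoid α) : Prop :=
  w ≠ 1 ∧ ¬ ∃ (z : FreeMonoid α) (t : ℕ), 2 ≤ t ∧ w = z ^ t

/-- Let `u` and `v` be nonempty words which are not both powers of a common word and whose
last letters are distinct.  Then for every `n ≥ 3` the word `(uv)^n u` is primitive. -/
theorem power_word_primitive {α : Type*} (u v : FreeMonoid α)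
    (hu : u ≠ 1) (hv : v ≠ 1)
    (hcommon : ¬ ∃ (z : FreeMonoid α) (i j : ℕ), u = z ^ i ∧ v = z ^ j)
    (hlast : (FreeMonoid.toList u).getLast? ≠ (FreeMonoid.toList v).getLast?) :
    ∀ n : ℕ, 3 ≤ n → FreeMonoid.Primitive ((u * v) ^ n * u) := by
  intro n hn
  set tu := FreeMonoid.toList u with htu
  set tv := FreeMonoid.toList v with htv
  have hulen : 0 < tu.length := by
    rcases Nat.eq_zero_or_pos tu.length with h0 | h
    · exact absurd (FreeMonoid.toList.injective (by simpa using List.length_eq_zero_iff.mp h0)) hu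
    · exact h
  have hvlen : 0 < tv.length := by
    rcases Nat.eq_zero_or_pos tv.length with h0 | h
    · exact absurd (FreeMonoid.toList.injective (by simpa using List.length_eq_zero_iff.mp h0)) hv
    · exact h
  set p : List α := tu ++ tv with hp
  set W : List α := FreeMonoid.toList ((u * v) ^ n * u) with hW
  have hWeq : W = lpow p n ++ tu := by
    rw [hW, FreeMonoid.toList_mul, toList_pow, FreeMonoid.toList_mul]
  have hWlen : W.length = n * p.length + tu.length := by
    rw [hWeq]; simp
  have hplen : 0 < p.length := by simp [hp]; omega
  constructor
  · intro h1
    have h2 : W.length = 0 := by rw [hW, h1]; rfl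
    omega
  rintro ⟨z, t, ht, hzt⟩
  set tz := FreeMonoid.toList z with htz
  have hWz : W = lpow tz t := by rw [hW, hzt, toList_pow]
  have hWzlen : W.length = t * tz.length := by rw [hWz]; simp
  have hzlen : 0 < tz.length := by
    rcases Nat.eq_zero_or_pos tz.length with h0 | h
    · rw [h0, Nat.mul_zero] at hWzlen; omega
    · exact h
  -- period |tz|
  have hsucc' : ∀ (x : List α) (m : ℕ), lpow x (m+1) = lpow x m ++ x := by
    intro x m; rw [lpow_add, lpow_one]
  have hP1 : HasP W tz.length := by
    apply hasP_of_drop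
    rw [hWz]
    obtain ⟨t', rfl⟩ : ∃ t', t = t' + 1 := ⟨t - 1, by omega⟩
    have hd : (lpow tz (t'+1)).drop tz.length = lpow tz t' := by
      rw [lpow_succ, List.drop_left]
    rw [hd]
    exact ⟨tz, (hsucc' tz t').symm⟩
  -- period |p|
  have hP2 : HasP W p.length := by
    apply hasP_of_drop
    obtain ⟨n', rfl⟩ : ∃ n', n = n' + 1 := ⟨n - 1, by omega⟩
    have hd : W.drop p.length = lpow p n' ++ tu := by
      rw [hWeq, lpow_succ, List.append_assoc, List.drop_left]
    rw [hd]
    refine ⟨tv ++ tu, ?_⟩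
    rw [hWeq, hsucc', hp]
    simp [List.append_assoc]
  -- Fine and Wilf
  have hbound : tz.length + p.length ≤ W.length := by
    have h1 : 2 * tz.length ≤ t * tz.length := Nat.mul_le_mul_right _ ht
    have h2 : 3 * p.length ≤ n * p.length := Nat.mul_le_mul_right _ hn
    omega
  set g := Nat.gcd tz.length p.length with hg
  have hPg : HasP W g := HasP.gcd _ _ hP1 hP2 hbound
  have hg0 : 0 < g := Nat.gcd_pos_of_pos_left _ hzlen
  have hgz : g ∣ tz.length := Nat.gcd_dvd_left _ _
  have hgp : g ∣ p.length := Nat.gcd_dvd_right _ _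
  have hgW : g ∣ W.length := by rw [hWzlen]; exact hgz.mul_left t
  have hgu : g ∣ tu.length := by
    have h1 : g ∣ n * p.length := hgp.mul_left n
    have h2 : tu.length = W.length - n * p.length := by omega
    rw [h2]; exact Nat.dvd_sub hgW h1
  set r := W.take g with hr
  have hWr : W = lpow r (W.length / g) := eq_lpow_of_hasP hg0 W.length W le_rfl hPg hgW
  -- tu and p as powers of r
  have hrlen : r.length = g := by
    rw [hr, List.length_take]
    have : g ≤ W.length := Nat.le_of_dvd (by omega) hgW
    omega
  have htake_u : W.take tu.length = tu := by
    obtain ⟨n', rfl⟩ : ∃ n', n = n' + 1 := ⟨n - 1, by omega⟩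
    have hW2 : W = tu ++ (tv ++ (lpow p n' ++ tu)) := by
      rw [hWeq, lpow_succ, hp]; simp [List.append_assoc]
    rw [hW2, List.take_left]
  have htake_p : W.take p.length = p := by
    obtain ⟨n', rfl⟩ : ∃ n', n = n' + 1 := ⟨n - 1, by omega⟩
    have hW2 : W = p ++ (lpow p n' ++ tu) := by
      rw [hWeq, lpow_succ, List.append_assoc]
    rw [hW2, List.take_left]
  have hulepow : tu.length / g ≤ W.length / g := Nat.div_le_div_right (by omega)
  have hplepow : p.length / g ≤ W.length / g :=
    Nat.div_le_div_right (by rw [hWlen]; nlinarith)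
  have hu_pow : tu = lpow r (tu.length / g) := by
    have := take_mul_lpow r (tu.length / g) (W.length / g) hulepow
    rw [hrlen, Nat.div_mul_cancel hgu, ← hWr] at this
    rw [← this, htake_u]
  have hp_pow : p = lpow r (p.length / g) := by
    have := take_mul_lpow r (p.length / g) (W.length / g) hplepow
    rw [hrlen, Nat.div_mul_cancel hgp, ← hWr] at this
    rw [← this, htake_p]
  have hle : tu.length / g ≤ p.length / g := by
    apply Nat.div_le_div_right; simp [hp]
  have hv_pow : tv = lpow r (p.length / g - tu.length / g) := by
    have : lpow r (p.length / g) = lpow r (tu.length / g) ++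
        lpow r (p.length / g - tu.length / g) := by
      rw [← lpow_add]
      congr 1
      omega
    rw [← hp_pow, ← hu_pow, hp] at this
    exact List.append_cancel_left this
  apply hcommon
  refine ⟨FreeMonoid.ofList r, tu.length / g, p.length / g - tu.length / g, ?_, ?_⟩
  · apply FreeMonoid.toList.injective
    rw [toList_pow, FreeMonoid.toList_ofList]; exact hu_pow
  · apply FreeMonoid.toList.injective
    rw [toList_pow, FreeMonoid.toList_ofList]; exact hv_pow
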